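/- Case I (generalized Charlier is self-coherent of the second kind): Let z, b ∈ ℂ with z ≠ 0 and b + k ≠ 0 for every integer k ≥ 1. Define ρ : ℤ → ℂ by ρ(x) = z^x/((b+1)_x · x!) for x ≥ 0 and ρ(x) = 0 for x < 0. Then with Λ₃(x) = 1 and Λ₂(x) = x(x+b)/z − 1, one has Λ₃(x)ρ(x) − Λ₃(x−1)ρ(x−1) + Λ₂(x)ρ(x) = 0 for every integer x. -/

import Mathlib

/-- The Pochhammer symbol `(a)_n = a(a+1)⋯(a+n−1)`. -/
noncomputable def poch (a : ℂ) (n : ℕ) : ℂ := ∏ k ∈ Finset.range n, (a + k)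

/-- Case I: the generalized Charlier weight `ρ(x) = z^x/((b+1)_x x!)` satisfies the
Pearson-type equation `∇(Λ₃ρ) + Λ₂ρ = 0` with `Λ₃ = 1` and `Λ₂(x) = x(x+b)/z − 1`,
i.e. the generalized Charlier functional is self-coherent of the second kind. -/
theorem gen_charlier_self_coherent (z b : ℂ) (hz : z ≠ 0)
    (hb : ∀ k : ℕ, 1 ≤ k → b + (k : ℂ) ≠ 0) (ρ : ℤ → ℂ)
    (hρneg : ∀ x : ℤ, x < 0 → ρ x = 0)
    (hρ : ∀ x : ℤ, 0 ≤ x →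
      ρ x = z ^ x.toNat / (poch (b + 1) x.toNat * (x.toNat.factorial : ℂ))) :
    ∀ x : ℤ,
      (1 : ℂ) * ρ x - (1 : ℂ) * ρ (x - 1) +
        ((x : ℂ) * ((x : ℂ) + b) / z - 1) * ρ x = 0 := by
  intro x
  rcases lt_or_ge x 0 with hx | hx
  · rw [hρneg x hx, hρneg (x - 1) (by omega)]; ring
  · obtain ⟨n, rfl⟩ := Int.eq_ofNat_of_zero_le hx
    have hpoch : ∀ k, poch (b + 1) k ≠ 0 := by
      intro k
      apply Finset.prod_ne_zero_iff.2
      intro i _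
      have h := hb (i + 1) (by omega)
      push_cast at h ⊢
      intro hc; apply h; linear_combination hc
    cases n with
    | zero =>
      have h0 := hρ ((0 : ℕ) : ℤ) (by norm_num)
      rw [show (((0 : ℕ) : ℤ) - 1) = (-1 : ℤ) by norm_num, hρneg (-1) (by norm_num), h0]
      simp [poch]
    | succ m =>
      have h1 := hρ ((m + 1 : ℕ) : ℤ) (by positivity)
      have h2 : (((m + 1 : ℕ) : ℤ) - 1) = ((m : ℕ) : ℤ) := by push_cast; ring
      have h3 := hρ ((m : ℕ) : ℤ) (by positivity)
      rw [h1, h2, h3]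
      simp only [Int.toNat_natCast]
      have hrec : poch (b + 1) (m + 1) = poch (b + 1) m * (b + (m + 1)) := by
        rw [poch, poch, Finset.prod_range_succ]; ring
      have hfac : (((m + 1).factorial : ℂ)) = (m.factorial : ℂ) * (m + 1) := by
        rw [Nat.factorial_succ]; push_cast; ring
      rw [hrec, hfac]
      have hP := hpoch m
      have hF : (m.factorial : ℂ) ≠ 0 := Nat.cast_ne_zero.2 m.factorial_ne_zero
      have hB : b + ((m : ℂ) + 1) ≠ 0 := by
        have h := hb (m + 1) (by omega); push_cast at h
        intro hc; exact h (by linear_combination hc)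
      have hM : ((m : ℂ) + 1) ≠ 0 := Nat.cast_add_one_ne_zero m
      push_cast
      field_simp
      ring
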